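/- Let A, B, C, D be subspaces of a finite-dimensional vector space U over a field with D ⊆ A ∩ B. Then the discoordination of A, B, C in U equals the discoordination of their images in the quotient U/D: DisCoord^U(A, B, C) = DisCoord^{U/D}([A]_D, [B]_D, [C]_D). -/

import Mathlib

/-- The discoordination of `X` with respect to the family `A`:
`Σ_i (dim A_i − |X ∩ A_i|)`. -/
noncomputable def disCoordX (𝔽 : Type*) [Field 𝔽] {U : Type*} [AddCommGroup U]
    [Module 𝔽 U] {m : ℕ} (X : Set U) (A : Fin m → Submodule 𝔽 U) : ℕ :=
  ∑ i, (Module.finrank 𝔽 ↥(A i) - (X ∩ (A i : Set U)).ncard)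

/-- The discoordination of the family `A₁, …, A_m`: the minimum of
`disCoordX` over all linearly independent subsets `X` of the ambient space. -/
noncomputable def DisCoord (𝔽 : Type*) [Field 𝔽] {U : Type*} [AddCommGroup U]
    [Module 𝔽 U] {m : ℕ} (A : Fin m → Submodule 𝔽 U) : ℕ :=
  sInf { n : ℕ | ∃ X : Set U, LinearIndependent 𝔽 (fun x : X => (x : U)) ∧
    n = disCoordX 𝔽 X A }

open Submodule Set Module

set_option linter.unusedSectionVars false
set_option maxHeartbeats 1000000

section Helpers

variable {𝔽 U : Type*} [Field 𝔽] [AddCommGroup U] [Module 𝔽 U] [FiniteDimensional 𝔽 U]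

/-- An element of a linearly independent set is not in the span of the rest. -/
lemma notMemSpanDiff {s : Set U} (hs : LinearIndependent 𝔽 ((↑) : s → U))
    {x : U} (hx : x ∈ s) : x ∉ span 𝔽 (s \ {x}) := by
  have h1 : x ∉ s \ {x} := by simp
  have h2 : insert x (s \ {x}) = s := Set.insert_diff_singleton.trans (by simp [hx])
  simpa using ((linearIndepOn_insert (f := id) h1).mp (by rw [h2]; exact hs)).2

/-- Disjointness of spans of disjoint pieces of a linearly independent set. -/
lemma disjointSpan {s t : Set U} (hst : Disjoint s t)
    (h : LinearIndependent 𝔽 ((↑) : (s ∪ t : Set U) → U)) :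
    Disjoint (span 𝔽 s) (span 𝔽 t) := by
  have hs : ((↑) : (s ∪ t : Set U) → U) '' {x | (x : U) ∈ s} = s := by
    ext u; constructor
    · rintro ⟨⟨x, hxu⟩, hxs, rfl⟩; exact hxs
    · intro hu; exact ⟨⟨u, Or.inl hu⟩, hu, rfl⟩
  have ht : ((↑) : (s ∪ t : Set U) → U) '' {x | (x : U) ∈ t} = t := by
    ext u; constructor
    · rintro ⟨⟨x, hxu⟩, hxs, rfl⟩; exact hxs
    · intro hu; exact ⟨⟨u, Or.inr hu⟩, hu, rfl⟩
  have := h.disjoint_span_image (s := {x | (x : U) ∈ s}) (t := {x | (x : U) ∈ t}) ?_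
  · rwa [hs, ht] at this
  · rw [Set.disjoint_left]
    rintro ⟨x, hxu⟩ hxs hxt
    exact Set.disjoint_left.mp hst hxs hxt

lemma ncard_eq_finrank_span {s : Set U} (hs : LinearIndependent 𝔽 ((↑) : s → U)) :
    s.ncard = finrank 𝔽 (span 𝔽 s) := by
  have hfin : s.Finite := hs.setFinite
  haveI := hfin.fintype
  rw [finrank_span_set_eq_card hs, Set.ncard_eq_toFinset_card']

lemma ncard_le_finrank {W : Submodule 𝔽 U} {s : Set U}
    (hs : LinearIndependent 𝔽 ((↑) : s → U)) (hsW : s ⊆ W) : s.ncard ≤ finrank 𝔽 W := by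
  rw [ncard_eq_finrank_span hs]
  exact Submodule.finrank_mono (span_le.mpr hsW)

lemma finrank_map_mkQ (W D : Submodule 𝔽 U) :
    finrank 𝔽 (W.map D.mkQ) + finrank 𝔽 (W ⊓ D : Submodule 𝔽 U) = finrank 𝔽 W := by
  have h := (D.mkQ.comp W.subtype).finrank_range_add_finrank_ker
  rw [LinearMap.range_comp, Submodule.range_subtype, LinearMap.ker_comp, Submodule.ker_mkQ] at h
  rw [← h]
  congr 1
  have e := Submodule.comapSubtypeEquivOfLe (inf_le_left : W ⊓ D ≤ W)
  rw [show D.comap W.subtype = (W ⊓ D).comap W.subtype by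
    rw [Submodule.comap_inf]; simp [Submodule.comap_subtype_self]]
  exact e.finrank_eq.symm

lemma exchange {A B C D : Submodule 𝔽 U} {X P : Set U} {v : U}
    (hX : LinearIndependent 𝔽 ((↑) : X → U)) (hPX : P ⊆ X)
    (hvA : v ∈ A) (hvB : v ∈ B) (hvD : v ∈ D) (hPD : P ⊆ (D : Set U))
    (hvP : v ∉ span 𝔽 P)
    (hvC : v ∉ C → v ∉ (span 𝔽 P ⊔ (C ⊓ D) : Submodule 𝔽 U)) :
    ∃ X' : Set U, LinearIndependent 𝔽 ((↑) : X' → U) ∧ P ⊆ X' ∧ v ∈ X' ∧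
      disCoordX 𝔽 X' ![A, B, C] ≤ disCoordX 𝔽 X ![A, B, C] := by
  classical
  by_cases hvX : v ∈ X
  · exact ⟨X, hX, hPX, hvX, le_rfl⟩
  by_cases hsp : v ∈ span 𝔽 X
  · -- exchange case
    obtain ⟨c, hcsupp, hcsum⟩ := Submodule.mem_span_set.mp hsp
    have hvspanS : v ∈ span 𝔽 (c.support : Set U) := Submodule.mem_span_set.mpr ⟨c, subset_rfl, hcsum⟩
    have hx0 : ∃ x₀ ∈ c.support, x₀ ∉ P ∧ (v ∉ C → x₀ ∉ C) := by
      by_cases hvCm : v ∈ C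
      · have hns : ¬ ((c.support : Set U) ⊆ P) := fun h => hvP (span_mono h hvspanS)
        obtain ⟨x₀, hx₀S, hx₀P⟩ := Set.not_subset.mp hns
        exact ⟨x₀, hx₀S, hx₀P, fun h => absurd hvCm h⟩
      · by_contra h
        push_neg at h
        have hsub : (c.support : Set U) ⊆ P ∪ (C : Set U) := by
          intro x hx
          by_cases hxP : x ∈ P
          · exact Or.inl hxP
          · exact Or.inr (h x hx hxP).2
        have hv2 : v ∈ span 𝔽 P ⊔ C := by
          have : v ∈ span 𝔽 (P ∪ (C : Set U)) := span_mono hsub hvspanS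
          rwa [span_union, Submodule.span_eq] at this
        obtain ⟨p, hp, w, hw, hpw⟩ := Submodule.mem_sup.mp hv2
        have hpD : p ∈ D := span_le.mpr hPD hp
        have hwD : w ∈ D := by
          have : w = v - p := by rw [← hpw]; abel
          rw [this]; exact sub_mem hvD hpD
        exact hvC hvCm (Submodule.mem_sup.mpr ⟨p, hp, w, ⟨hw, hwD⟩, hpw⟩)
    obtain ⟨x₀, hx₀S, hx₀P, hx₀C⟩ := hx0
    have hx₀X : x₀ ∈ X := hcsupp hx₀S
    have hx₀nz : c x₀ ≠ 0 := Finsupp.mem_support_iff.mp hx₀S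
    -- v not in the span of X \ {x₀}
    have hw : ∑ x ∈ c.support.erase x₀, c x • x ∈ span 𝔽 (X \ {x₀}) := by
      apply Submodule.sum_mem
      intro x hx
      have hx1 : x ∈ c.support := Finset.mem_of_mem_erase hx
      exact Submodule.smul_mem _ _ (subset_span ⟨hcsupp hx1, Finset.ne_of_mem_erase hx⟩)
    have hcsum' : ∑ x ∈ c.support, c x • x = v := by rw [← hcsum]; rfl
    have hvw : c x₀ • x₀ + ∑ x ∈ c.support.erase x₀, c x • x = v := by
      rw [← hcsum']; exact Finset.add_sum_erase _ (fun x => c x • x) hx₀S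
    have hnotmem : v ∉ span 𝔽 (X \ {x₀}) := by
      intro hvmem
      apply notMemSpanDiff hX hx₀X
      have : c x₀ • x₀ ∈ span 𝔽 (X \ {x₀}) := by
        have : c x₀ • x₀ = v - ∑ x ∈ c.support.erase x₀, c x • x := by
          rw [← hvw]; abel
        rw [this]; exact sub_mem hvmem hw
      have := Submodule.smul_mem _ (c x₀)⁻¹ this
      rwa [inv_smul_smul₀ hx₀nz] at this
    set X' := insert v (X \ {x₀}) with hX'def
    have hX' : LinearIndependent 𝔽 ((↑) : X' → U) :=
      (LinearIndepOn.mono (v := id) hX Set.diff_subset).id_insert hnotmem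
    have hfinX : X.Finite := hX.setFinite
    have hfinX' : X'.Finite := hX'.setFinite
    have key : ∀ W : Submodule 𝔽 U, (v ∈ W ∨ x₀ ∉ (W : Set U)) →
        (X ∩ (W : Set U)).ncard ≤ (X' ∩ (W : Set U)).ncard := by
      intro W hW
      rcases hW with hvW | hx₀W
      · have h1 : X ∩ (W : Set U) ⊆ insert x₀ ((X ∩ (W : Set U)) \ {x₀}) := by
          intro x hx
          by_cases hxx : x = x₀
          · exact Or.inl hxx
          · exact Or.inr ⟨hx, hxx⟩
        have hvnot : v ∉ (X ∩ (W : Set U)) \ {x₀} := fun h => hvX h.1.1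
        have hsub2 : insert v ((X ∩ (W : Set U)) \ {x₀}) ⊆ X' ∩ (W : Set U) := by
          rintro x (rfl | ⟨⟨hxX, hxW⟩, hxx⟩)
          · exact ⟨Or.inl rfl, hvW⟩
          · exact ⟨Or.inr ⟨hxX, hxx⟩, hxW⟩
        calc (X ∩ (W : Set U)).ncard
            ≤ (insert x₀ ((X ∩ (W : Set U)) \ {x₀})).ncard :=
              Set.ncard_le_ncard h1 (((hfinX.inter_of_left _).diff).insert _)
          _ ≤ ((X ∩ (W : Set U)) \ {x₀}).ncard + 1 := Set.ncard_insert_le _ _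
          _ = (insert v ((X ∩ (W : Set U)) \ {x₀})).ncard :=
              (Set.ncard_insert_of_notMem hvnot ((hfinX.inter_of_left _).diff)).symm
          _ ≤ (X' ∩ (W : Set U)).ncard :=
              Set.ncard_le_ncard hsub2 (hfinX'.inter_of_left _)
      · apply Set.ncard_le_ncard _ (hfinX'.inter_of_left _)
        intro x ⟨hxX, hxW⟩
        refine ⟨Or.inr ⟨hxX, ?_⟩, hxW⟩
        rintro rfl
        exact hx₀W hxW
    refine ⟨X', hX', ?_, Or.inl rfl, ?_⟩
    · intro p hp
      refine Or.inr ⟨hPX hp, ?_⟩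
      rintro rfl
      exact hx₀P hp
    · apply Finset.sum_le_sum
      intro i _
      apply Nat.sub_le_sub_left
      fin_cases i
      · exact key A (Or.inl hvA)
      · exact key B (Or.inl hvB)
      · by_cases hvCm : v ∈ C
        · exact key C (Or.inl hvCm)
        · exact key C (Or.inr (hx₀C hvCm))
  · -- insert case
    refine ⟨insert v X, LinearIndepOn.id_insert (s := X) hX hsp, hPX.trans (Set.subset_insert _ _),
      Set.mem_insert _ _, ?_⟩
    have hfin : (insert v X).Finite := LinearIndependent.setFinite (LinearIndepOn.id_insert (s := X) hX hsp)
    apply Finset.sum_le_sum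
    intro i _
    apply Nat.sub_le_sub_left
    exact Set.ncard_le_ncard (Set.inter_subset_inter_left _ (Set.subset_insert _ _))
      (hfin.inter_of_left _)

/-- A good "basis pair" for `D` and `C ⊓ D`. -/
lemma existsE (C D : Submodule 𝔽 U) :
    ∃ E Ec : Set U, Ec ⊆ E ∧ LinearIndependent 𝔽 ((↑) : E → U) ∧ E ⊆ (D : Set U) ∧
      span 𝔽 E = D ∧ Ec ⊆ (C : Set U) ∧ span 𝔽 Ec = C ⊓ D ∧ E ∩ (C : Set U) = Ec ∧
      E.ncard = finrank 𝔽 D ∧ Ec.ncard = finrank 𝔽 (C ⊓ D : Submodule 𝔽 U) := by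
  obtain ⟨Ec, hEcsub, hEcspan, hEcli⟩ :=
    exists_linearIndependent 𝔽 ((C ⊓ D : Submodule 𝔽 U) : Set U)
  rw [Submodule.span_eq] at hEcspan
  have hEcD : Ec ⊆ (D : Set U) := fun x hx => (Submodule.mem_inf.mp (hEcsub hx)).2
  have hEcC : Ec ⊆ (C : Set U) := fun x hx => (Submodule.mem_inf.mp (hEcsub hx)).1
  obtain ⟨E, hED, hEcE, hDsp, hEli⟩ := exists_linearIndepOn_id_extension hEcli hEcD
  have hspanE : span 𝔽 E = D := by
    apply le_antisymm (span_le.mpr hED)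
    intro x hx
    exact hDsp hx
  have hEC : E ∩ (C : Set U) = Ec := by
    apply Set.Subset.antisymm
    · rintro x ⟨hxE, hxC⟩
      by_contra hxEc
      have h1 : Ec ⊆ E \ {x} := fun y hy => ⟨hEcE hy, by rintro rfl; exact hxEc hy⟩
      have h2 : x ∈ span 𝔽 Ec := by
        rw [hEcspan]; exact Submodule.mem_inf.mpr ⟨hxC, hED hxE⟩
      exact notMemSpanDiff hEli hxE (span_mono h1 h2)
    · exact Set.subset_inter hEcE hEcC
  have hEfin : E.Finite := LinearIndependent.setFinite hEli
  haveI := hEfin.fintype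
  have hcardE : E.ncard = finrank 𝔽 D := by
    rw [← hspanE, finrank_span_set_eq_card hEli, Set.ncard_eq_toFinset_card']
  have hcardEc : Ec.ncard = finrank 𝔽 (C ⊓ D : Submodule 𝔽 U) := by
    haveI := (hEfin.subset hEcE).fintype
    rw [← hEcspan, finrank_span_set_eq_card hEcli, Set.ncard_eq_toFinset_card']
  exact ⟨E, Ec, hEcE, hEli, hED, hspanE, hEcC, hEcspan, hEC, hcardE, hcardEc⟩

lemma insertAll {A B C D : Submodule 𝔽 U} (hDA : D ≤ A) (hDB : D ≤ B)
    {E Ec : Set U} (hEcE : Ec ⊆ E) (hE : LinearIndependent 𝔽 ((↑) : E → U))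
    (hED : E ⊆ (D : Set U)) (hEcC : Ec ⊆ (C : Set U))
    (hCD : (C ⊓ D : Submodule 𝔽 U) ≤ span 𝔽 Ec)
    {X : Set U} (hX : LinearIndependent 𝔽 ((↑) : X → U)) :
    ∃ X' : Set U, LinearIndependent 𝔽 ((↑) : X' → U) ∧ E ⊆ X' ∧
      disCoordX 𝔽 X' ![A, B, C] ≤ disCoordX 𝔽 X ![A, B, C] := by
  have hEfin : E.Finite := hE.setFinite
  refine Set.Finite.induction_on_subset
    (motive := fun F _ => ∃ X' : Set U, LinearIndependent 𝔽 ((↑) : X' → U) ∧ F ⊆ X' ∧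
      disCoordX 𝔽 X' ![A, B, C] ≤ disCoordX 𝔽 X ![A, B, C])
    E hEfin ⟨X, hX, Set.empty_subset _, le_rfl⟩ ?_
  rintro v F' hvE hF'E hvF' ⟨X', hX', hF'X', hval⟩
  have hF'v : F' ⊆ E \ {v} := fun x hx => ⟨hF'E hx, by rintro rfl; exact hvF' hx⟩
  have hvP : v ∉ span 𝔽 F' :=
    fun h => notMemSpanDiff hE hvE (span_mono hF'v h)
  have hvC : v ∉ C → v ∉ (span 𝔽 F' ⊔ (C ⊓ D) : Submodule 𝔽 U) := by
    intro hvCm h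
    apply notMemSpanDiff hE hvE
    have h1 : (span 𝔽 F' ⊔ (C ⊓ D) : Submodule 𝔽 U) ≤ span 𝔽 (E \ {v}) := by
      apply sup_le
      · exact span_mono hF'v
      · refine hCD.trans (span_mono ?_)
        intro x hx
        exact ⟨hEcE hx, by rintro rfl; exact hvCm (hEcC hx)⟩
    exact h1 h
  obtain ⟨X'', hX'', hF'X'', hvX'', hval''⟩ :=
    exchange (C := C) hX' hF'X' (hDA (hED hvE)) (hDB (hED hvE)) (hED hvE)
      (fun x hx => hED (hF'E hx)) hvP hvC
  exact ⟨X'', hX'', Set.insert_subset hvX'' hF'X'', hval''.trans hval⟩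

lemma quotLe {A B C D : Submodule 𝔽 U} (hDA : D ≤ A) (hDB : D ≤ B)
    {X : Set U} (hX : LinearIndependent 𝔽 ((↑) : X → U)) :
    ∃ Y : Set (U ⧸ D), LinearIndependent 𝔽 ((↑) : Y → U ⧸ D) ∧
      disCoordX 𝔽 Y ![A.map D.mkQ, B.map D.mkQ, C.map D.mkQ] ≤
        disCoordX 𝔽 X ![A, B, C] := by
  obtain ⟨E, Ec, hEcE, hEli, hED, hspanE, hEcC, hspanEc, hEC, hcardE, hcardEc⟩ := existsE C D
  obtain ⟨Xs, hXs, hEXs, hval⟩ :=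
    insertAll hDA hDB hEcE hEli hED hEcC (le_of_eq hspanEc.symm) hX
  set T : Set U := Xs \ E with hTdef
  have hXsfin : Xs.Finite := hXs.setFinite
  have hTfin : T.Finite := hXsfin.diff
  have hTE : T ∪ E = Xs := Set.diff_union_of_subset hEXs
  have hTli : LinearIndependent 𝔽 ((↑) : T → U) := LinearIndepOn.mono (v := id) hXs Set.diff_subset
  have hdisj : Disjoint (span 𝔽 T) D := by
    rw [← hspanE]
    exact disjointSpan disjoint_sdiff_left (by rwa [hTE])
  have hinj : Set.InjOn D.mkQ T := by
    intro x hx y hy hxy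
    have h1 : x - y ∈ span 𝔽 T := sub_mem (subset_span hx) (subset_span hy)
    have h2 : x - y ∈ D := by
      rw [← Submodule.ker_mkQ D, LinearMap.mem_ker, map_sub, hxy, sub_self]
    have := Submodule.disjoint_def.mp hdisj _ h1 h2
    exact sub_eq_zero.mp this
  set Y : Set (U ⧸ D) := D.mkQ '' T with hYdef
  have hYfin : Y.Finite := hTfin.image _
  have hYli : LinearIndependent 𝔽 ((↑) : Y → U ⧸ D) := by
    have hq : LinearIndependent 𝔽 (D.mkQ ∘ ((↑) : T → U)) := by
      apply hTli.map
      rwa [Subtype.range_coe, Submodule.ker_mkQ]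
    exact (by have := hq.linearIndepOn_id; rwa [Set.range_comp, Subtype.range_coe] at this)
  refine ⟨Y, hYli, le_trans ?_ hval⟩
  -- counting
  have hcount : ∀ W : Submodule 𝔽 U,
      (Xs ∩ (W : Set U)).ncard - (E ∩ (W : Set U)).ncard ≤
        (Y ∩ ((W.map D.mkQ : Submodule 𝔽 (U ⧸ D)) : Set (U ⧸ D))).ncard := by
    intro W
    have h1 : D.mkQ '' (T ∩ (W : Set U)) ⊆
        Y ∩ ((W.map D.mkQ : Submodule 𝔽 (U ⧸ D)) : Set (U ⧸ D)) := by
      rintro _ ⟨x, ⟨hxT, hxW⟩, rfl⟩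
      exact ⟨⟨x, hxT, rfl⟩, Submodule.mem_map_of_mem hxW⟩
    have h2 : (D.mkQ '' (T ∩ (W : Set U))).ncard = (T ∩ (W : Set U)).ncard :=
      Set.ncard_image_of_injOn (hinj.mono Set.inter_subset_left)
    have h3 : T ∩ (W : Set U) = (Xs ∩ (W : Set U)) \ (E ∩ (W : Set U)) := by
      ext x
      simp only [hTdef, Set.mem_inter_iff, Set.mem_diff]
      tauto
    have h4 : (E ∩ (W : Set U)) ⊆ (Xs ∩ (W : Set U)) :=
      Set.inter_subset_inter_left _ hEXs
    have h5 := Set.ncard_diff h4 (hXsfin.subset (h4.trans Set.inter_subset_left))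
    calc (Xs ∩ (W : Set U)).ncard - (E ∩ (W : Set U)).ncard
        = (T ∩ (W : Set U)).ncard := by rw [h3, h5]
      _ = (D.mkQ '' (T ∩ (W : Set U))).ncard := h2.symm
      _ ≤ _ := Set.ncard_le_ncard h1 (hYfin.inter_of_left _)
  have hterm : ∀ W : Submodule 𝔽 U,
      (E ∩ (W : Set U)).ncard = finrank 𝔽 (W ⊓ D : Submodule 𝔽 U) →
      finrank 𝔽 (W.map D.mkQ) -
          (Y ∩ ((W.map D.mkQ : Submodule 𝔽 (U ⧸ D)) : Set (U ⧸ D))).ncard ≤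
        finrank 𝔽 W - (Xs ∩ (W : Set U)).ncard := by
    intro W hEW
    have e1 := finrank_map_mkQ W D
    have e2 := hcount W
    have e3 : (E ∩ (W : Set U)).ncard ≤ (Xs ∩ (W : Set U)).ncard :=
      Set.ncard_le_ncard (Set.inter_subset_inter_left _ hEXs) (hXsfin.inter_of_left _)
    omega
  have hEA : E ∩ (A : Set U) = E := Set.inter_eq_left.mpr (fun x hx => hDA (hED hx))
  have hEB : E ∩ (B : Set U) = E := Set.inter_eq_left.mpr (fun x hx => hDB (hED hx))
  have hAD : A ⊓ D = D := inf_eq_right.mpr hDA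
  have hBD : B ⊓ D = D := inf_eq_right.mpr hDB
  apply Finset.sum_le_sum
  intro i _
  fin_cases i
  · have h := hterm A (by rw [hEA, hAD, hcardE]); simp at h ⊢; exact h
  · have h := hterm B (by rw [hEB, hBD, hcardE]); simp at h ⊢; exact h
  · have h := hterm C (by rw [hEC, hcardEc]); simp at h ⊢; exact h

lemma liftLe {A B C D : Submodule 𝔽 U} (hDA : D ≤ A) (hDB : D ≤ B)
    {Y : Set (U ⧸ D)} (hY : LinearIndependent 𝔽 ((↑) : Y → U ⧸ D)) :
    ∃ X : Set U, LinearIndependent 𝔽 ((↑) : X → U) ∧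
      disCoordX 𝔽 X ![A, B, C] ≤
        disCoordX 𝔽 Y ![A.map D.mkQ, B.map D.mkQ, C.map D.mkQ] := by
  classical
  obtain ⟨E, Ec, hEcE, hEli, hED, hspanE, hEcC, hspanEc, hEC, hcardE, hcardEc⟩ := existsE C D
  have hEfin : E.Finite := hEli.setFinite
  have hYfin : Y.Finite := hY.setFinite
  -- choice of lifts
  have hch : ∀ y : U ⧸ D, ∃ u : U, D.mkQ u = y ∧ (y ∈ C.map D.mkQ → u ∈ C) := by
    intro y
    by_cases hyC : y ∈ C.map D.mkQ
    · obtain ⟨c, hc, hcy⟩ := hyC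
      exact ⟨c, hcy, fun _ => hc⟩
    · obtain ⟨u, hu⟩ := Submodule.mkQ_surjective D y
      exact ⟨u, hu, fun h => absurd h hyC⟩
  choose ℓ hℓ1 hℓ2 using hch
  have liftmem : ∀ (W : Submodule 𝔽 U), D ≤ W → ∀ y : U ⧸ D, y ∈ W.map D.mkQ →
      ∀ u : U, D.mkQ u = y → u ∈ W := by
    intro W hDW y hy u hu
    obtain ⟨w, hw, hwy⟩ := hy
    have : u - w ∈ D := by
      rw [← Submodule.ker_mkQ D, LinearMap.mem_ker, map_sub, hu, hwy, sub_self]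
    have : u - w ∈ W := hDW this
    have := add_mem this hw
    rwa [sub_add_cancel] at this
  have hinj : Set.InjOn ℓ Y := by
    intro y hy y' hy' h
    rw [← hℓ1 y, ← hℓ1 y', h]
  set X : Set U := E ∪ ℓ '' Y with hXdef
  have hzero : (0 : U ⧸ D) ∉ Y := fun h => hY.ne_zero ⟨0, h⟩ rfl
  have hdisjEY : Disjoint E (ℓ '' Y) := by
    rw [Set.disjoint_left]
    rintro x hxE ⟨y, hy, rfl⟩
    have h1 : D.mkQ (ℓ y) = 0 := by
      rw [Submodule.mkQ_apply]
      exact (Submodule.Quotient.mk_eq_zero D).mpr (hED hxE)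
    rw [hℓ1 y] at h1
    exact hzero (h1 ▸ hy)
  -- linear independence of X
  have hXli : LinearIndependent 𝔽 ((↑) : X → U) := by
    apply LinearIndepOn.union_id_of_quotient (M' := D) hED hEli
    have hmem : ∀ x : (ℓ '' Y : Set U), D.mkQ ↑x ∈ Y := by
      rintro ⟨x, y, hy, rfl⟩
      rw [hℓ1]; exact hy
    have hf_inj : Function.Injective
        (fun x : (ℓ '' Y : Set U) => (⟨D.mkQ ↑x, hmem x⟩ : Y)) := by
      rintro ⟨x, hx⟩ ⟨x', hx'⟩ h
      have h2 : D.mkQ x = D.mkQ x' := Subtype.ext_iff.mp h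
      obtain ⟨y, hy, hxy⟩ := hx
      obtain ⟨y', hy', hxy'⟩ := hx'
      subst hxy
      subst hxy'
      rw [hℓ1, hℓ1] at h2
      exact Subtype.ext (show ℓ y = ℓ y' by rw [h2])
    have := hY.comp _ hf_inj
    have heq : (((↑) : Y → U ⧸ D) ∘
        fun x : (ℓ '' Y : Set U) => (⟨D.mkQ ↑x, hmem x⟩ : Y)) =
        (Submodule.Quotient.mk ∘ Subtype.val : (ℓ '' Y : Set U) → U ⧸ D) := by
      funext x
      simp [Submodule.mkQ_apply]
    rwa [heq] at this
  refine ⟨X, hXli, ?_⟩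
  have hXfin : X.Finite := hEfin.union (hYfin.image _)
  -- counting
  have hcount : ∀ W : Submodule 𝔽 U,
      ℓ '' (Y ∩ ((W.map D.mkQ : Submodule 𝔽 (U ⧸ D)) : Set (U ⧸ D))) ⊆ (W : Set U) →
      (Y ∩ ((W.map D.mkQ : Submodule 𝔽 (U ⧸ D)) : Set (U ⧸ D))).ncard +
        (E ∩ (W : Set U)).ncard ≤ (X ∩ (W : Set U)).ncard := by
    intro W hsub
    set YW := Y ∩ ((W.map D.mkQ : Submodule 𝔽 (U ⧸ D)) : Set (U ⧸ D)) with hYW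
    have h1 : (E ∩ (W : Set U)) ∪ ℓ '' YW ⊆ X ∩ (W : Set U) := by
      rintro x (⟨hxE, hxW⟩ | hx)
      · exact ⟨Or.inl hxE, hxW⟩
      · obtain ⟨y, hy, rfl⟩ := hx
        exact ⟨Or.inr ⟨y, hy.1, rfl⟩, hsub ⟨y, hy, rfl⟩⟩
    have h2 : Disjoint (E ∩ (W : Set U)) (ℓ '' YW) := by
      apply Set.disjoint_of_subset Set.inter_subset_left _ hdisjEY
      exact Set.image_mono Set.inter_subset_left
    have h3 : (ℓ '' YW).ncard = YW.ncard :=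
      Set.ncard_image_of_injOn (hinj.mono Set.inter_subset_left)
    calc YW.ncard + (E ∩ (W : Set U)).ncard
        = (E ∩ (W : Set U)).ncard + (ℓ '' YW).ncard := by rw [h3]; ring
      _ = ((E ∩ (W : Set U)) ∪ ℓ '' YW).ncard :=
          (Set.ncard_union_eq h2 (hEfin.inter_of_left _) ((hYfin.inter_of_left _).image _)).symm
      _ ≤ (X ∩ (W : Set U)).ncard := Set.ncard_le_ncard h1 (hXfin.inter_of_left _)
  have hterm : ∀ W : Submodule 𝔽 U,
      ℓ '' (Y ∩ ((W.map D.mkQ : Submodule 𝔽 (U ⧸ D)) : Set (U ⧸ D))) ⊆ (W : Set U) →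
      (E ∩ (W : Set U)).ncard = finrank 𝔽 (W ⊓ D : Submodule 𝔽 U) →
      finrank 𝔽 W - (X ∩ (W : Set U)).ncard ≤
        finrank 𝔽 (W.map D.mkQ) -
          (Y ∩ ((W.map D.mkQ : Submodule 𝔽 (U ⧸ D)) : Set (U ⧸ D))).ncard := by
    intro W hsub hEW
    have e1 := finrank_map_mkQ W D
    have e2 := hcount W hsub
    have e3 : (Y ∩ ((W.map D.mkQ : Submodule 𝔽 (U ⧸ D)) : Set (U ⧸ D))).ncard ≤
        finrank 𝔽 (W.map D.mkQ) :=
      ncard_le_finrank (LinearIndepOn.mono (v := id) hY Set.inter_subset_left) Set.inter_subset_right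
    omega
  have hEA : E ∩ (A : Set U) = E := Set.inter_eq_left.mpr (fun x hx => hDA (hED hx))
  have hEB : E ∩ (B : Set U) = E := Set.inter_eq_left.mpr (fun x hx => hDB (hED hx))
  have hAD : A ⊓ D = D := inf_eq_right.mpr hDA
  have hBD : B ⊓ D = D := inf_eq_right.mpr hDB
  have hsubA : ∀ (W : Submodule 𝔽 U), D ≤ W →
      ℓ '' (Y ∩ ((W.map D.mkQ : Submodule 𝔽 (U ⧸ D)) : Set (U ⧸ D))) ⊆ (W : Set U) := by
    rintro W hDW _ ⟨y, ⟨hyY, hyW⟩, rfl⟩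
    exact liftmem W hDW y hyW (ℓ y) (hℓ1 y)
  have hsubC : ℓ '' (Y ∩ ((C.map D.mkQ : Submodule 𝔽 (U ⧸ D)) : Set (U ⧸ D))) ⊆
      (C : Set U) := by
    rintro _ ⟨y, ⟨hyY, hyC⟩, rfl⟩
    exact hℓ2 y hyC
  apply Finset.sum_le_sum
  intro i _
  fin_cases i
  · have h := hterm A (hsubA A hDA) (by rw [hEA, hAD, hcardE]); simp at h ⊢; exact h
  · have h := hterm B (hsubA B hDB) (by rw [hEB, hBD, hcardE]); simp at h ⊢; exact h
  · have h := hterm C hsubC (by rw [hEC, hcardEc]); simp at h ⊢; exact h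

end Helpers

/-- If `D ⊆ A ∩ B`, then the discoordination of `A, B, C` in `U`
equals the discoordination of their images `[A]_D, [B]_D, [C]_D` in `U/D`. -/
theorem disCoord_quotient_by_sub_of_inter {𝔽 U : Type*} [Field 𝔽] [AddCommGroup U]
    [Module 𝔽 U] [FiniteDimensional 𝔽 U] (A B C D : Submodule 𝔽 U)
    (hD : D ≤ A ⊓ B) :
    DisCoord 𝔽 ![A, B, C] =
      DisCoord 𝔽 ![A.map D.mkQ, B.map D.mkQ, C.map D.mkQ] := by
  have hDA : D ≤ A := hD.trans inf_le_left
  have hDB : D ≤ B := hD.trans inf_le_right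
  have hne₁ : { n : ℕ | ∃ X : Set U, LinearIndependent 𝔽 (fun x : X => (x : U)) ∧
      n = disCoordX 𝔽 X ![A, B, C] }.Nonempty :=
    ⟨disCoordX 𝔽 (∅ : Set U) ![A, B, C], ∅, linearIndependent_empty 𝔽 U, rfl⟩
  have hne₂ : { n : ℕ | ∃ Y : Set (U ⧸ D), LinearIndependent 𝔽 (fun x : Y => (x : U ⧸ D)) ∧
      n = disCoordX 𝔽 Y ![A.map D.mkQ, B.map D.mkQ, C.map D.mkQ] }.Nonempty :=
    ⟨disCoordX 𝔽 (∅ : Set (U ⧸ D)) ![A.map D.mkQ, B.map D.mkQ, C.map D.mkQ], ∅,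
      linearIndependent_empty 𝔽 (U ⧸ D), rfl⟩
  apply le_antisymm
  · -- upstairs ≤ downstairs : lift a minimizer from the quotient
    obtain ⟨Y, hY, hYeq⟩ := Nat.sInf_mem hne₂
    obtain ⟨X, hX, hXle⟩ := liftLe hDA hDB hY
    calc DisCoord 𝔽 ![A, B, C] ≤ disCoordX 𝔽 X ![A, B, C] :=
          Nat.sInf_le ⟨X, hX, rfl⟩
      _ ≤ disCoordX 𝔽 Y ![A.map D.mkQ, B.map D.mkQ, C.map D.mkQ] := hXle
      _ = DisCoord 𝔽 ![A.map D.mkQ, B.map D.mkQ, C.map D.mkQ] := hYeq.symm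
  · -- downstairs ≤ upstairs : project a minimizer to the quotient
    obtain ⟨X, hX, hXeq⟩ := Nat.sInf_mem hne₁
    obtain ⟨Y, hY, hYle⟩ := quotLe (C := C) hDA hDB hX
    calc DisCoord 𝔽 ![A.map D.mkQ, B.map D.mkQ, C.map D.mkQ]
          ≤ disCoordX 𝔽 Y ![A.map D.mkQ, B.map D.mkQ, C.map D.mkQ] :=
          Nat.sInf_le ⟨Y, hY, rfl⟩
      _ ≤ disCoordX 𝔽 X ![A, B, C] := hYle
      _ = DisCoord 𝔽 ![A, B, C] := hXeq.symm
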